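/- Let N ≥ 3, R > 0, and let G be the Green-type kernel G(x,y) = 1/|x−y|^{N−2} − 1/((|x|/R)·|y − R²x/|x|²|)^{N−2}, defined for x, y ∈ B_R with x ≠ 0, y ≠ 0, and x ≠ y. Let H ⊂ ℝ^N be an open half-space with 0 ∈ ∂H and let σ_H be the reflection across ∂H. Then for all x, y ∈ H ∩ B_R with x ≠ y, G(x, y) ≥ G(σ_H x, y). -/
import Mathlib


open scoped RealInnerProductSpace

/-- The reflection of `ℝ^N` across the hyperplane `{x : ⟪a,x⟫ = 0}` through the
origin, bounding the open half-space `H = {x : ⟪a,x⟫ > 0}`. -/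
noncomputable def reflectHyp0 {E : Type*} [NormedAddCommGroup E] [InnerProductSpace ℝ E]
    (a : E) (x : E) : E :=
  x - ((2 * ⟪a, x⟫) / ⟪a, a⟫) • a

/-- The Green-type kernel of the ball `B_R ⊂ ℝ^N`:
`G(x,y) = 1/|x−y|^{N−2} − 1/((|x|/R)·|y − R²x/|x|²|)^{N−2}`. -/
noncomputable def greenK (N : ℕ) (R : ℝ) (x y : EuclideanSpace ℝ (Fin N)) : ℝ :=
  1 / ‖x - y‖ ^ (N - 2) -
    1 / ((‖x‖ / R) * ‖y - (R ^ 2 / ‖x‖ ^ 2) • x‖) ^ (N - 2)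

open Real Set

lemma convexOn_rpow_neg' {q : ℝ} (hq : 0 ≤ q) :
    ConvexOn ℝ (Set.Ioi (0:ℝ)) (fun u : ℝ => u ^ (-q)) := by
  refine ⟨convex_Ioi 0, ?_⟩
  intro u hu v hv b c hb hc hbc
  simp only [smul_eq_mul, mem_Ioi] at *
  have huv : 0 < b * u + c * v := by
    rcases eq_or_lt_of_le hb with h | h
    · rw [← h] at hbc ⊢; simp at hbc; nlinarith
    · nlinarith [mul_nonneg hc hv.le]
  have hlog : b * log u + c * log v ≤ log (b * u + c * v) := by
    have := strictConcaveOn_log_Ioi.concaveOn.2 (mem_Ioi.2 hu) (mem_Ioi.2 hv) hb hc hbc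
    simpa [smul_eq_mul] using this
  rw [rpow_def_of_pos hu, rpow_def_of_pos hv, rpow_def_of_pos huv]
  calc exp (log (b * u + c * v) * (-q))
      ≤ exp ((b * log u + c * log v) * (-q)) := by
        apply exp_le_exp.2; nlinarith
    _ = exp (b * (log u * (-q)) + c * (log v * (-q))) := by ring_nf
    _ ≤ b * exp (log u * (-q)) + c * exp (log v * (-q)) := by
        have := convexOn_exp.2 (Set.mem_univ (log u * (-q))) (Set.mem_univ (log v * (-q))) hb hc hbc
        simpa [smul_eq_mul] using this

lemma four_point' {q A s T : ℝ} (hq : 0 ≤ q) (hA : 0 < A) (hs : 0 ≤ s) (hT : 0 ≤ T) :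
    (A + T) ^ (-q) + (A + s) ^ (-q) ≤ A ^ (-q) + (A + s + T) ^ (-q) := by
  rcases eq_or_lt_of_le (add_nonneg hs hT) with h | h
  · have hs0 : s = 0 := by linarith
    have hT0 : T = 0 := by linarith
    simp [hs0, hT0]
  set t : ℝ := T / (s + T) with ht
  have ht0 : 0 ≤ t := div_nonneg hT (by linarith)
  have ht1 : t ≤ 1 := by rw [ht]; rw [div_le_one h]; linarith
  have conv := convexOn_rpow_neg' (q := q) hq
  have e1 : (1 - t) * A + t * (A + s + T) = A + T := by rw [ht]; field_simp; ring
  have e2 : t * A + (1 - t) * (A + s + T) = A + s := by rw [ht]; field_simp; ring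
  have h1 := conv.2 (mem_Ioi.2 hA) (mem_Ioi.2 (by linarith : (0:ℝ) < A + s + T))
    (by linarith : (0:ℝ) ≤ 1 - t) ht0 (by ring)
  have h2 := conv.2 (mem_Ioi.2 hA) (mem_Ioi.2 (by linarith : (0:ℝ) < A + s + T))
    ht0 (by linarith : (0:ℝ) ≤ 1 - t) (by ring)
  simp only [smul_eq_mul] at h1 h2
  rw [e1] at h1
  rw [e2] at h2
  nlinarith [rpow_nonneg hA.le (-q), rpow_nonneg (by linarith : (0:ℝ) ≤ A+s+T) (-q)]

lemma one_div_pow_eq' {t : ℝ} (ht : 0 ≤ t) (m : ℕ) :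
    1 / t ^ m = (t ^ 2) ^ (-((m : ℝ) / 2)) := by
  rw [Real.rpow_neg (sq_nonneg t), one_div]
  congr 1
  rw [← Real.rpow_natCast t 2, ← Real.rpow_mul ht, ← Real.rpow_natCast t m]
  congr 1
  push_cast
  ring


set_option maxHeartbeats 1000000 in
/-- For every open half-space `H = {x : ⟪a,x⟫ > 0}` with `0 ∈ ∂H` and
all `x, y ∈ H ∩ B_R` with `x ≠ y`, the Green-type kernel satisfies
`G(x,y) ≥ G(σ_H x, y)`. -/
theorem stmt_19 (N : ℕ) (hN : 3 ≤ N) (R : ℝ) (hR : 0 < R)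
    (a : EuclideanSpace ℝ (Fin N)) (ha : a ≠ 0)
    (x y : EuclideanSpace ℝ (Fin N))
    (hxB : x ∈ Metric.closedBall (0 : EuclideanSpace ℝ (Fin N)) R)
    (hyB : y ∈ Metric.closedBall (0 : EuclideanSpace ℝ (Fin N)) R)
    (hxH : 0 < ⟪a, x⟫) (hyH : 0 < ⟪a, y⟫) (hxy : x ≠ y) :
    greenK N R (reflectHyp0 a x) y ≤ greenK N R x y := by
  have haa : 0 < ⟪a, a⟫ := by
    rw [real_inner_self_eq_norm_sq]
    have : 0 < ‖a‖ := norm_pos_iff.2 ha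
    positivity
  have hx0 : x ≠ 0 := by rintro rfl; simp at hxH
  have hnx : 0 < ‖x‖ := norm_pos_iff.2 hx0
  have hxR : ‖x‖ ≤ R := by simpa using mem_closedBall_zero_iff.1 hxB
  have hyR : ‖y‖ ≤ R := by simpa using mem_closedBall_zero_iff.1 hyB
  obtain ⟨ax, hax⟩ : ∃ c, ⟪a, x⟫ = c := ⟨_, rfl⟩
  obtain ⟨ay, hay⟩ : ∃ c, ⟪a, y⟫ = c := ⟨_, rfl⟩
  obtain ⟨aA, haA⟩ : ∃ c, ⟪a, a⟫ = c := ⟨_, rfl⟩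
  obtain ⟨xy, hxyi⟩ : ∃ c, ⟪x, y⟫ = c := ⟨_, rfl⟩
  rw [hax] at hxH; rw [hay] at hyH; rw [haA] at haa
  set w := reflectHyp0 a x with hw
  have hwdef : w = x - ((2 * ax) / aA) • a := by rw [hw, reflectHyp0, hax, haA]
  have expand : ∀ (c : ℝ) (u v : EuclideanSpace ℝ (Fin N)),
      ‖u - c • v‖ ^ 2 = ‖u‖ ^ 2 - 2 * c * ⟪v, u⟫ + c ^ 2 * ‖v‖ ^ 2 := by
    intro c u v
    rw [← real_inner_self_eq_norm_sq, ← real_inner_self_eq_norm_sq,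
      ← real_inner_self_eq_norm_sq]
    simp only [inner_sub_left, inner_sub_right, real_inner_smul_left, real_inner_smul_right]
    rw [real_inner_comm v u]
    ring
  have hwx : ‖w‖ ^ 2 = ‖x‖ ^ 2 := by
    rw [hwdef, expand, ← real_inner_self_eq_norm_sq a, hax, haA]
    field_simp
    ring
  have hwnorm : ‖w‖ = ‖x‖ := by
    have := congrArg Real.sqrt hwx
    simpa [Real.sqrt_sq (norm_nonneg _)] using this
  set A := ‖x - y‖ ^ 2 with hA'
  set T := 4 * ax * ay / aA with hT'
  set s := (R ^ 2 - ‖x‖ ^ 2) * (R ^ 2 - ‖y‖ ^ 2) / R ^ 2 with hs'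
  have hA : 0 < A := by
    have h0 : (0:ℝ) < ‖x - y‖ := norm_pos_iff.2 (sub_ne_zero.2 hxy)
    rw [hA']
    positivity
  have hT : 0 ≤ T := div_nonneg (by positivity) haa.le
  have hs : 0 ≤ s := by
    apply div_nonneg _ (by positivity)
    apply mul_nonneg <;> nlinarith [norm_nonneg x, norm_nonneg y]
  have hB : ‖w - y‖ ^ 2 = A + T := by
    have hrw : w - y = (x - y) - ((2 * ax) / aA) • a := by
      rw [hwdef]; abel
    rw [hrw, expand, ← real_inner_self_eq_norm_sq a]
    have h5 : ⟪a, x - y⟫ = ax - ay := by rw [inner_sub_right, hax, hay]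
    rw [h5, haA, hA', hT']
    field_simp
    ring
  have hAex : A = ‖x‖ ^ 2 - 2 * xy + ‖y‖ ^ 2 := by
    rw [hA', @norm_sub_sq_real, hxyi]
  have hC : ((‖x‖ / R) * ‖y - (R ^ 2 / ‖x‖ ^ 2) • x‖) ^ 2 = A + s := by
    rw [mul_pow, div_pow, expand, hxyi, hAex, hs']
    field_simp
    ring
  have hwy : xy - T / 2 = ⟪w, y⟫ := by
    rw [hwdef, hT']
    rw [inner_sub_left, real_inner_smul_left, hxyi, hay]
    field_simp
    ring
  have hD : ((‖w‖ / R) * ‖y - (R ^ 2 / ‖w‖ ^ 2) • w‖) ^ 2 = A + s + T := by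
    rw [mul_pow, div_pow, expand, ← hwy, hwx, hAex, hs', hT']
    field_simp
    ring
  -- rewrite greenK
  have hq : (0:ℝ) ≤ (N - 2 : ℕ) / 2 := by positivity
  have g1 : greenK N R x y = A ^ (-((N - 2 : ℕ) : ℝ) / 2) - (A + s) ^ (-((N - 2 : ℕ) : ℝ) / 2) := by
    rw [greenK, one_div_pow_eq' (norm_nonneg _), one_div_pow_eq' (by positivity), hC, hA']
    ring_nf
  have g2 : greenK N R w y = (A + T) ^ (-((N - 2 : ℕ) : ℝ) / 2)
      - (A + s + T) ^ (-((N - 2 : ℕ) : ℝ) / 2) := by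
    rw [greenK, one_div_pow_eq' (norm_nonneg _), one_div_pow_eq' (by positivity), hD, hB]
    ring_nf
  rw [g1, g2]
  have := four_point' (q := ((N - 2 : ℕ) : ℝ) / 2) hq hA hs hT
  have hne : -(((N - 2 : ℕ) : ℝ) / 2) = -((N - 2 : ℕ) : ℝ) / 2 := by ring
  rw [hne] at this
  linarith
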